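/- Let $(x_n)$ be a real sequence and $n$ a fixed index. Suppose $p, q$ are integers with $q \ge 1$ satisfying $|\Delta x_n - p/q| \le 1/(q q')$ for some $q' > q$, and suppose $\Delta^2 x_i \le \varepsilon'$ for all $i \ge n$, where $q \varepsilon' \le 1/q^3$ and $1/(qq') \le 1/q^2$. Then for all $1 \le j \le q$: $\left|x_{n+j} - x_n - \frac{jp}{q}\right| \le \frac{2}{q}$. -/

import Mathlib

/-- Estimate (x25): Diophantine approximation propagated along the sequence. -/
theorem approx_along_sequence (x : ℕ → ℝ) (n : ℕ) (p : ℤ) (q : ℕ) (q' ε' : ℝ)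
    (hq : 1 ≤ q) (hq' : (q : ℝ) < q')
    (happrox : |(x (n + 1) - x n) - (p : ℝ) / q| ≤ 1 / (q * q'))
    (hΔ2 : ∀ i : ℕ, n ≤ i → 0 ≤ x (i + 2) - 2 * x (i + 1) + x i ∧
      x (i + 2) - 2 * x (i + 1) + x i ≤ ε')
    (hε' : (q : ℝ) * ε' ≤ 1 / (q : ℝ) ^ 3)
    (hqq' : 1 / ((q : ℝ) * q') ≤ 1 / (q : ℝ) ^ 2) :
    ∀ j : ℕ, 1 ≤ j → j ≤ q →
      |x (n + j) - x n - (j : ℝ) * p / q| ≤ 2 / q := by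
  have hq0 : (0:ℝ) < q := by exact_mod_cast Nat.lt_of_lt_of_le Nat.zero_lt_one hq
  have hε0 : 0 ≤ ε' := le_trans (hΔ2 n le_rfl).1 (hΔ2 n le_rfl).2
  set D : ℕ → ℝ := fun k => x (n + k + 1) - x (n + k) - (p : ℝ) / q with hD
  have hstep : ∀ k : ℕ, |D k| ≤ 1 / (q * q') + k * ε' := by
    intro k
    induction k with
    | zero => simpa [hD] using happrox
    | succ k ih =>
      have h2 := hΔ2 (n + k) (Nat.le_add_right n k)
      have hDk : D (k + 1) = D k + (x (n + k + 2) - 2 * x (n + k + 1) + x (n + k)) := by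
        simp only [hD, show n + (k + 1) + 1 = n + k + 2 from rfl,
          show n + (k + 1) = n + k + 1 from rfl]
        ring
      have hb : |D (k + 1)| ≤ |D k| + ε' := by
        rw [hDk]
        calc |D k + (x (n + k + 2) - 2 * x (n + k + 1) + x (n + k))|
            ≤ |D k| + |x (n + k + 2) - 2 * x (n + k + 1) + x (n + k)| := abs_add_le _ _
          _ ≤ |D k| + ε' := by
              gcongr
              rw [abs_of_nonneg h2.1]; exact h2.2
      refine hb.trans ?_
      push_cast
      nlinarith [ih]
  have hbound : ∀ k : ℕ, k < q → |D k| ≤ 2 / (q:ℝ) ^ 2 := by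
    intro k hk
    refine (hstep k).trans ?_
    have h1 : (k:ℝ) * ε' ≤ (q:ℝ) * ε' := by
      exact mul_le_mul_of_nonneg_right (by exact_mod_cast hk.le) hε0
    have hq1 : (1:ℝ) ≤ (q:ℝ) := by exact_mod_cast hq
    have h2 : 1 / (q:ℝ)^3 ≤ 1 / (q:ℝ)^2 :=
      one_div_le_one_div_of_le (by positivity) (pow_le_pow_right₀ hq1 (by norm_num))
    have heq : 2 / (q:ℝ)^2 = 1 / (q:ℝ)^2 + 1 / (q:ℝ)^2 := by ring
    rw [heq]
    exact add_le_add hqq' ((h1.trans hε').trans h2)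
  have htel : ∀ j : ℕ, x (n + j) - x n - (j : ℝ) * p / q = ∑ k ∈ Finset.range j, D k := by
    intro j
    induction j with
    | zero => simp
    | succ j ih =>
      rw [Finset.sum_range_succ, ← ih]
      simp only [hD, show n + (j + 1) = n + j + 1 from rfl]
      push_cast
      ring
  intro j hj1 hjq
  rw [htel]
  calc |∑ k ∈ Finset.range j, D k| ≤ ∑ k ∈ Finset.range j, |D k| :=
        Finset.abs_sum_le_sum_abs _ _
    _ ≤ ∑ k ∈ Finset.range j, 2 / (q:ℝ)^2 := by
        refine Finset.sum_le_sum fun k hk => hbound k ?_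
        exact lt_of_lt_of_le (Finset.mem_range.mp hk) hjq
    _ = j * (2 / (q:ℝ)^2) := by rw [Finset.sum_const, Finset.card_range]; ring
    _ ≤ q * (2 / (q:ℝ)^2) := by gcongr
    _ = 2 / q := by field_simp
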